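/- Let θ > 0 and let ζ satisfy 0 < ζ ≤ θ/(1+θ). Define r(t) = (t/2)·max(min(ζ·t/θ, 1−ζ), 0) + (1−t)·min(ζ·t/θ, 1) for t ∈ [0,1]. Then sup over t ∈ [0,1] of r(t) equals ζ/(2θ), attained at t = 1; i.e., for sufficiently small training power exponent ζ, inter-node interference causes no loss and the sequential beamforming multiplexing gain equals the interference-free value ζ/(2θ). (Low-ζ branch of Theorem 11.) -/

import Mathlib

open Real Set

/-- Low-ζ branch of Theorem 11 of the paper: for small training power exponent `ζ`,
inter-node interference causes no multiplexing-gain loss for sequential beamforming,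
the maximum `ζ/(2θ)` being attained at `t = 1`. -/
theorem max_multiplexing_gain_seqbf_closed_INI_lowzeta
    (θ ζ : ℝ) (hθ : 0 < θ) (hζ : 0 < ζ) (hζθ : ζ ≤ θ / (1 + θ))
    (r : ℝ → ℝ)
    (hr : ∀ t : ℝ, r t = (t / 2) * max (min (ζ * t / θ) (1 - ζ)) 0 +
        (1 - t) * min (ζ * t / θ) 1) :
    IsGreatest (r '' Set.Icc 0 1) (ζ / (2 * θ)) ∧ r 1 = ζ / (2 * θ) := by
  have h1θ : (0:ℝ) < 1 + θ := by linarith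
  have hkey : ζ * (1 + θ) ≤ θ := (le_div_iff₀ h1θ).mp hζθ
  have hval : ∀ t : ℝ, 0 ≤ t → t ≤ 1 → r t = ζ * t / θ * (t / 2) + (1 - t) * (ζ * t / θ) := by
    intro t ht0 ht1
    have hm : min (ζ * t / θ) (1 - ζ) = ζ * t / θ :=
      min_eq_left (by rw [div_le_iff₀ hθ]; nlinarith)
    have hm1 : min (ζ * t / θ) 1 = ζ * t / θ :=
      min_eq_left (by rw [div_le_iff₀ hθ]; nlinarith)
    have hnn : (0:ℝ) ≤ ζ * t / θ := by positivity
    rw [hr, hm, hm1, max_eq_left hnn]; ring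
  have hr1 : r 1 = ζ / (2 * θ) := by
    rw [hval 1 zero_le_one le_rfl]; field_simp; ring
  refine ⟨⟨⟨1, ⟨zero_le_one, le_rfl⟩, hr1⟩, ?_⟩, hr1⟩
  rintro y ⟨t, ⟨ht0, ht1⟩, rfl⟩
  rw [hval t ht0 ht1,
    show ζ * t / θ * (t / 2) + (1 - t) * (ζ * t / θ) = ζ / θ * (t - t ^ 2 / 2) by ring,
    show ζ / (2 * θ) = ζ / θ * (1 / 2) by ring]
  exact mul_le_mul_of_nonneg_left (by nlinarith [sq_nonneg (1 - t)]) (by positivity)
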